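/- For every S > 0 and every γ > 0, the infimum over λ > 0 of the quantity −γλ + (2/S²)·(cosh(λS) − 1) equals −(2/S²)·ζ(γS/2), and this infimum is attained at λ = arsinh(γS/2)/S. -/

import Mathlib

noncomputable section

/-- `ζ(x) = x·arsinh(x) + 1 − √(x² + 1)`. -/
def zeta (x : ℝ) : ℝ := x * Real.arsinh x + 1 - Real.sqrt (x ^ 2 + 1)

lemma cosh_tangent (a b : ℝ) : Real.cosh a + Real.sinh a * (b - a) ≤ Real.cosh b := by
  have h1 : Real.exp a * (1 + (b - a)) ≤ Real.exp b := by
    calc Real.exp a * (1 + (b - a)) ≤ Real.exp a * Real.exp (b - a) := by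
          exact mul_le_mul_of_nonneg_left (by linarith [Real.add_one_le_exp (b - a)])
            (Real.exp_pos a).le
      _ = Real.exp b := by rw [← Real.exp_add]; ring_nf
  have h2 : Real.exp (-a) * (1 + (a - b)) ≤ Real.exp (-b) := by
    calc Real.exp (-a) * (1 + (a - b)) ≤ Real.exp (-a) * Real.exp (a - b) := by
          exact mul_le_mul_of_nonneg_left (by linarith [Real.add_one_le_exp (a - b)])
            (Real.exp_pos (-a)).le
      _ = Real.exp (-b) := by rw [← Real.exp_add]; ring_nf
  rw [Real.cosh_eq, Real.cosh_eq, Real.sinh_eq]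
  nlinarith [h1, h2]

theorem stmt9 (S γ : ℝ) (hS : 0 < S) (hγ : 0 < γ) :
    IsLeast {v : ℝ | ∃ l : ℝ, 0 < l ∧ v = -(γ * l) + 2 / S ^ 2 * (Real.cosh (l * S) - 1)}
      (-(2 / S ^ 2 * zeta (γ * S / 2))) ∧
    -(γ * (Real.arsinh (γ * S / 2) / S)) +
        2 / S ^ 2 * (Real.cosh ((Real.arsinh (γ * S / 2) / S) * S) - 1) =
      -(2 / S ^ 2 * zeta (γ * S / 2)) := by
  set x := γ * S / 2 with hx
  have hxpos : 0 < x := by positivity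
  have ha : 0 < Real.arsinh x := by rw [← Real.arsinh_zero]; exact Real.arsinh_lt_arsinh.2 hxpos
  have hcosh : Real.cosh (Real.arsinh x / S * S) = Real.sqrt (x ^ 2 + 1) := by
    rw [div_mul_cancel₀ _ hS.ne', Real.cosh_arsinh, add_comm]
  have heq : -(γ * (Real.arsinh x / S)) +
      2 / S ^ 2 * (Real.cosh (Real.arsinh x / S * S) - 1) = -(2 / S ^ 2 * zeta x) := by
    rw [hcosh]
    unfold zeta
    field_simp
    ring_nf
    rw [hx]; ring
  refine ⟨⟨⟨Real.arsinh x / S, by positivity, heq.symm⟩, ?_⟩, heq⟩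
  rintro v ⟨l, hl, rfl⟩
  rw [← heq]
  have key := cosh_tangent (Real.arsinh x) (l * S)
  rw [Real.sinh_arsinh] at key
  have hS2 : (0:ℝ) < 2 / S ^ 2 := by positivity
  have hmul := mul_le_mul_of_nonneg_left key hS2.le
  have hg : 2 / S ^ 2 * (x * (l * S - Real.arsinh x)) = γ * l - γ * (Real.arsinh x / S) := by
    rw [hx]; field_simp
  have this2 : 2 / S ^ 2 * Real.cosh (Real.arsinh x) + (γ * l - γ * (Real.arsinh x / S)) ≤
      2 / S ^ 2 * Real.cosh (l * S) := by nlinarith [hmul, hg]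
  rw [div_mul_cancel₀ _ hS.ne']
  linarith [this2]
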